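/- Let A, B ∈ D[X] have the same degree d and valuation 0, fix ℓ ∈ {1, …, ⌊d/2⌋}, let (S_i)_{−1 ≤ i ≤ d} be the sequence of symmetric subresultants of A and B, and let (Ŝ_j)_{−1 ≤ j ≤ 2ℓ−1} be the sequence of symmetric subresultants of the truncations A_{|ℓ} and B_{|ℓ}. Then for 1 ≤ j < ℓ one has S_{j|(ℓ−j)} = Ŝ_{j|(ℓ−j)}; consequently S_{j|k} = Ŝ_{j|k} for every 0 ≤ k ≤ ℓ−j, and in particular S_j(0) = Ŝ_j(0) and lc(S_j) = lc(Ŝ_j) for every j < ℓ. -/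

import Mathlib

open Polynomial

/-- The `2j × 2j` square submatrix `Sylv_{j,ℓ}(A,B)` of the Sylvester-type matrix of `A` and `B`
(of formal degree `d`): rows are the coefficient vectors of `A, XA, …, X^{j-1}A, B, …, X^{j-1}B`,
keeping the columns of degrees `0, …, j-2`, the column of degree `j-1+ℓ`, and the columns of
degrees `d, …, d+j-1`. -/
noncomputable def sylvMat {R : Type*} [CommRing R] (A B : R[X]) (d j ℓ : ℕ) :
    Matrix (Fin (2 * j)) (Fin (2 * j)) R := fun r c =>
  (if (r : ℕ) < j then X ^ (r : ℕ) * A else X ^ ((r : ℕ) - j) * B).coeff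
    (if (c : ℕ) < j - 1 then (c : ℕ)
     else if (c : ℕ) = j - 1 then j - 1 + ℓ
     else d + ((c : ℕ) - j))

/-- The sequence of symmetric subresultants of `A` and `B` (of formal degree `d`):
`S_0 = B` and `S_j = ∑_{ℓ=0}^{d-j} det (Sylv_{j,ℓ}(A,B)) · X^ℓ` for `1 ≤ j`. -/
noncomputable def symSubres {R : Type*} [CommRing R] (A B : R[X]) (d j : ℕ) : R[X] :=
  if j = 0 then B
  else ∑ ℓ ∈ Finset.range (d - j + 1), C (sylvMat A B d j ℓ).det * X ^ ℓ

/-- Symmetric truncation `P_{|ℓ}` of a polynomial `P` of formal degree `d`: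
`P_{|ℓ} = p_0 + ⋯ + p_{ℓ-1}X^{ℓ-1} + p_{d-ℓ+1}X^ℓ + ⋯ + p_d X^{2ℓ-1}` for `1 ≤ ℓ ≤ ⌊d/2⌋`,
with `P_{|0} = 0` and `P_{|ℓ} = P` for `ℓ > ⌊d/2⌋`. -/
noncomputable def strunc {R : Type*} [CommRing R] (P : R[X]) (d ℓ : ℕ) : R[X] :=
  if ℓ = 0 then 0
  else if 2 * ℓ ≤ d then
    (∑ i ∈ Finset.range ℓ, C (P.coeff i) * X ^ i) +
      ∑ i ∈ Finset.range ℓ, C (P.coeff (d - ℓ + 1 + i)) * X ^ (ℓ + i)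
  else P

section helpers
variable {R : Type*} [CommRing R]

lemma coeff_XpowMul (P : R[X]) (r e : ℕ) :
    (X ^ r * P).coeff e = if r ≤ e then P.coeff (e - r) else 0 := by
  rw [mul_comm, Polynomial.coeff_mul_X_pow']

lemma strunc_coeff_low (P : R[X]) {d ℓ i : ℕ} (hℓ : ℓ ≠ 0) (hd : 2 * ℓ ≤ d) (hi : i < ℓ) :
    (strunc P d ℓ).coeff i = P.coeff i := by
  rw [strunc, if_neg hℓ, if_pos hd]
  simp only [coeff_add, finset_sum_coeff, coeff_C_mul, coeff_X_pow, mul_ite, mul_one, mul_zero]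
  rw [Finset.sum_ite_eq, if_pos (Finset.mem_range.mpr hi),
    Finset.sum_eq_zero (fun m hm => by rw [if_neg]; omega), add_zero]

lemma strunc_coeff_high (P : R[X]) {d ℓ i : ℕ} (hℓ : ℓ ≠ 0) (hd : 2 * ℓ ≤ d) (hi : i < ℓ) :
    (strunc P d ℓ).coeff (ℓ + i) = P.coeff (d - ℓ + 1 + i) := by
  rw [strunc, if_neg hℓ, if_pos hd]
  simp only [coeff_add, finset_sum_coeff, coeff_C_mul, coeff_X_pow, mul_ite, mul_one, mul_zero]
  rw [Finset.sum_eq_zero (fun m hm => by rw [if_neg]; simp at hm; omega), zero_add]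
  have : ∀ m ∈ Finset.range ℓ, (if ℓ + i = ℓ + m then P.coeff (d - ℓ + 1 + m) else 0)
      = (if i = m then P.coeff (d - ℓ + 1 + m) else 0) := by
    intro m _; congr 1; exact propext ⟨fun h => by omega, fun h => by omega⟩
  rw [Finset.sum_congr rfl this, Finset.sum_ite_eq, if_pos (Finset.mem_range.mpr hi)]

lemma strunc_coeff_ge (P : R[X]) {d ℓ s : ℕ} (hℓ : ℓ ≠ 0) (hd : 2 * ℓ ≤ d) (hs : 2 * ℓ ≤ s) :
    (strunc P d ℓ).coeff s = 0 := by
  rw [strunc, if_neg hℓ, if_pos hd]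
  simp only [coeff_add, finset_sum_coeff, coeff_C_mul, coeff_X_pow, mul_ite, mul_one, mul_zero]
  rw [Finset.sum_eq_zero (fun m hm => by rw [if_neg]; simp at hm; omega),
    Finset.sum_eq_zero (fun m hm => by rw [if_neg]; simp at hm; omega), add_zero]

lemma entry_low (P : R[X]) {d ℓ : ℕ} (r : ℕ) {e : ℕ} (hℓ : ℓ ≠ 0) (hd : 2 * ℓ ≤ d)
    (he : e < ℓ) :
    (X ^ r * P).coeff e = (X ^ r * strunc P d ℓ).coeff e := by
  rw [coeff_XpowMul, coeff_XpowMul]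
  by_cases hr : r ≤ e
  · rw [if_pos hr, if_pos hr, strunc_coeff_low P hℓ hd (by omega)]
  · rw [if_neg hr, if_neg hr]

lemma entry_high (P : R[X]) {d ℓ r e' : ℕ} (hP : ∀ n, d < n → P.coeff n = 0)
    (hℓ : ℓ ≠ 0) (hd : 2 * ℓ ≤ d) (hr : ℓ + r ≤ e') :
    (X ^ r * P).coeff (e' + (d - 2 * ℓ + 1)) = (X ^ r * strunc P d ℓ).coeff e' := by
  rw [coeff_XpowMul, coeff_XpowMul, if_pos (by omega), if_pos (by omega)]
  by_cases hs : e' - r < 2 * ℓ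
  · have h1 : e' - r = ℓ + (e' - r - ℓ) := by omega
    rw [h1, strunc_coeff_high P hℓ hd (by omega)]
    congr 1; omega
  · rw [strunc_coeff_ge P hℓ hd (by omega), hP]; omega

lemma col_entry (P : R[X]) {d ℓ j m m' : ℕ} (hP : ∀ n, d < n → P.coeff n = 0)
    (hj1 : 1 ≤ j) (hjℓ : j < ℓ) (hd : 2 * ℓ ≤ d)
    (hm : (m' = m ∧ j - 1 + m < ℓ) ∨ (ℓ ≤ m' ∧ m = m' + (d - 2 * ℓ + 1)))
    (r : ℕ) (hr : r ≤ j - 1) (c : ℕ) :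
    (X ^ r * P).coeff
        (if c < j - 1 then c else if c = j - 1 then j - 1 + m else d + (c - j))
      = (X ^ r * strunc P d ℓ).coeff
        (if c < j - 1 then c else if c = j - 1 then j - 1 + m' else (2 * ℓ - 1) + (c - j)) := by
  have hℓ0 : ℓ ≠ 0 := by omega
  by_cases h1 : c < j - 1
  · rw [if_pos h1, if_pos h1]; exact entry_low P r hℓ0 hd (by omega)
  · by_cases h2 : c = j - 1
    · rw [if_neg h1, if_pos h2, if_neg h1, if_pos h2]
      rcases hm with ⟨h, hlt⟩ | ⟨hge, heq⟩
      · subst h; exact entry_low P r hℓ0 hd hlt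
      · have h3 : j - 1 + m = (j - 1 + m') + (d - 2 * ℓ + 1) := by omega
        rw [h3]; exact entry_high P hP hℓ0 hd (by omega)
    · rw [if_neg h1, if_neg h2, if_neg h1, if_neg h2]
      have h3 : d + (c - j) = (2 * ℓ - 1 + (c - j)) + (d - 2 * ℓ + 1) := by omega
      rw [h3]; exact entry_high P hP hℓ0 hd (by omega)

lemma sylv_eq (A B : R[X]) {d ℓ j m m' : ℕ}
    (hA : ∀ n, d < n → A.coeff n = 0) (hB : ∀ n, d < n → B.coeff n = 0)
    (hj1 : 1 ≤ j) (hjℓ : j < ℓ) (hd : 2 * ℓ ≤ d)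
    (hm : (m' = m ∧ j - 1 + m < ℓ) ∨ (ℓ ≤ m' ∧ m = m' + (d - 2 * ℓ + 1))) :
    sylvMat A B d j m = sylvMat (strunc A d ℓ) (strunc B d ℓ) (2 * ℓ - 1) j m' := by
  funext r c
  simp only [sylvMat]
  rcases lt_or_ge (r : ℕ) j with hr | hr
  · rw [if_pos hr, if_pos hr]
    exact col_entry A hA hj1 hjℓ hd hm (r : ℕ) (by omega) (c : ℕ)
  · rw [if_neg (not_lt.mpr hr), if_neg (not_lt.mpr hr)]
    exact col_entry B hB hj1 hjℓ hd hm ((r : ℕ) - j) (by have := r.isLt; omega) (c : ℕ)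

lemma coeff_symSubres (A B : R[X]) (d j n : ℕ) (hj : j ≠ 0) (hn : n ≤ d - j) :
    (symSubres A B d j).coeff n = (sylvMat A B d j n).det := by
  rw [symSubres, if_neg hj]
  simp only [finset_sum_coeff, coeff_C_mul, coeff_X_pow, mul_ite, mul_one, mul_zero]
  rw [Finset.sum_ite_eq, if_pos (Finset.mem_range.mpr (by omega))]

lemma key_coeff (A B : R[X]) {d ℓ j n n' : ℕ}
    (hA : ∀ n, d < n → A.coeff n = 0) (hB : ∀ n, d < n → B.coeff n = 0)
    (hj1 : 1 ≤ j) (hjℓ : j < ℓ) (hd : 2 * ℓ ≤ d)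
    (hn : (n' = n ∧ n < ℓ - j) ∨ (ℓ ≤ n' ∧ n' ≤ 2 * ℓ - 1 - j ∧ n = n' + (d - 2 * ℓ + 1))) :
    (symSubres A B d j).coeff n
      = (symSubres (strunc A d ℓ) (strunc B d ℓ) (2 * ℓ - 1) j).coeff n' := by
  rcases hn with ⟨h1, h2⟩ | ⟨h1, h2, h3⟩
  · rw [coeff_symSubres A B d j n (by omega) (by omega),
      coeff_symSubres _ _ (2 * ℓ - 1) j n' (by omega) (by omega),
      sylv_eq A B hA hB hj1 hjℓ hd (Or.inl ⟨h1, by omega⟩)]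
  · rw [coeff_symSubres A B d j n (by omega) (by omega),
      coeff_symSubres _ _ (2 * ℓ - 1) j n' (by omega) (by omega),
      sylv_eq A B hA hB hj1 hjℓ hd (Or.inr ⟨h1, by omega⟩)]

end helpers

lemma strunc_symSubres_eq {R : Type*} [CommRing R] (A B : R[X]) {d ℓ j k : ℕ}
    (hA : ∀ n, d < n → A.coeff n = 0) (hB : ∀ n, d < n → B.coeff n = 0)
    (hj1 : 1 ≤ j) (hjℓ : j < ℓ) (hd : 2 * ℓ ≤ d) (hk : k ≤ ℓ - j) :
    strunc (symSubres A B d j) (d - j) k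
      = strunc (symSubres (strunc A d ℓ) (strunc B d ℓ) (2 * ℓ - 1) j) (2 * ℓ - 1 - j) k := by
  by_cases hk0 : k = 0
  · subst hk0; rw [strunc, strunc, if_pos rfl, if_pos rfl]
  · rw [strunc, strunc, if_neg hk0, if_neg hk0, if_pos (by omega), if_pos (by omega)]
    refine congrArg₂ (· + ·) ?_ ?_
    · apply Finset.sum_congr rfl; intro i hi
      simp only [Finset.mem_range] at hi
      rw [key_coeff A B hA hB hj1 hjℓ hd (Or.inl ⟨rfl, by omega⟩)]
    · apply Finset.sum_congr rfl; intro i hi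
      simp only [Finset.mem_range] at hi
      have h : d - j - k + 1 + i = (2 * ℓ - 1 - j - k + 1 + i) + (d - 2 * ℓ + 1) := by omega
      rw [h, key_coeff A B hA hB hj1 hjℓ hd (Or.inr ⟨by omega, by omega, rfl⟩)]

/-- Truncations of the symmetric subresultants agree with the symmetric subresultants of the
truncations: `S_{j|(ℓ-j)} = Ŝ_{j|(ℓ-j)}` for `1 ≤ j < ℓ`; consequently `S_{j|k} = Ŝ_{j|k}`
for `0 ≤ k ≤ ℓ-j`, and `S_j(0) = Ŝ_j(0)` and `lc(S_j) = lc(Ŝ_j)` for every `j < ℓ`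
(leading coefficients taken at the formal degrees `d-j` and `2ℓ-1-j`). -/
theorem trunc_of_symSubres (D : Subring ℂ) (A B : Polynomial D) (d ℓ : ℕ)
    (hAdeg : A.degree = (d : ℕ)) (hBdeg : B.degree = (d : ℕ))
    (hAval : A.coeff 0 ≠ 0) (hBval : B.coeff 0 ≠ 0)
    (hℓ1 : 1 ≤ ℓ) (hℓ2 : 2 * ℓ ≤ d) :
    (∀ j, 1 ≤ j → j < ℓ →
      strunc (symSubres A B d j) (d - j) (ℓ - j) =
        strunc (symSubres (strunc A d ℓ) (strunc B d ℓ) (2 * ℓ - 1) j) (2 * ℓ - 1 - j)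
          (ℓ - j)) ∧
    (∀ j, 1 ≤ j → j < ℓ → ∀ k, k ≤ ℓ - j →
      strunc (symSubres A B d j) (d - j) k =
        strunc (symSubres (strunc A d ℓ) (strunc B d ℓ) (2 * ℓ - 1) j) (2 * ℓ - 1 - j) k) ∧
    (∀ j, j < ℓ →
      (symSubres A B d j).coeff 0 =
        (symSubres (strunc A d ℓ) (strunc B d ℓ) (2 * ℓ - 1) j).coeff 0 ∧
      (symSubres A B d j).coeff (d - j) =
        (symSubres (strunc A d ℓ) (strunc B d ℓ) (2 * ℓ - 1) j).coeff (2 * ℓ - 1 - j)) := by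
  have hA : ∀ n, d < n → A.coeff n = 0 := fun n hn =>
    coeff_eq_zero_of_degree_lt (by rw [hAdeg]; exact_mod_cast hn)
  have hB : ∀ n, d < n → B.coeff n = 0 := fun n hn =>
    coeff_eq_zero_of_degree_lt (by rw [hBdeg]; exact_mod_cast hn)
  refine ⟨fun j hj1 hjℓ => strunc_symSubres_eq A B hA hB hj1 hjℓ hℓ2 le_rfl,
    fun j hj1 hjℓ k hk => strunc_symSubres_eq A B hA hB hj1 hjℓ hℓ2 hk,
    fun j hjℓ => ?_⟩
  by_cases hj0 : j = 0
  · subst hj0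
    refine ⟨?_, ?_⟩
    · rw [symSubres, symSubres, if_pos rfl, if_pos rfl,
        strunc_coeff_low B (by omega) hℓ2 (by omega)]
    · rw [symSubres, symSubres, if_pos rfl, if_pos rfl]
      simp only [Nat.sub_zero]
      have h1 : 2 * ℓ - 1 = ℓ + (ℓ - 1) := by omega
      rw [h1, strunc_coeff_high B (by omega) hℓ2 (by omega)]
      congr 1; omega
  · refine ⟨?_, ?_⟩
    · exact key_coeff A B hA hB (by omega) hjℓ hℓ2 (Or.inl ⟨rfl, by omega⟩)
    · exact key_coeff A B hA hB (by omega) hjℓ hℓ2 (Or.inr ⟨by omega, by omega, by omega⟩)
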